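/- The Euclidean diameter of the unit ℓ₁-ball in ℝ^n equals 2, and the quantity ψ(L_n) defined as the maximum spectral norm over full-rank n×n submatrices M of the (row-normalized) facet matrix of L_n satisfies 1/√n ≤ ψ(L_n) ≤ √n; consequently the condition number η(L_n) = ψ(L_n)·D(L_n)/ξ(L_n) with ξ(L_n) = 2/√n lies in the interval [1, n]. -/

import Mathlib

open InnerProductSpace Finset

noncomputable section

abbrev Euc (n : ℕ) := EuclideanSpace ℝ (Fin n)

/-- The all-ones vector. -/
def ones (n : ℕ) : Euc n := WithLp.toLp 2 (fun _ : Fin n => (1 : ℝ))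

/-- The unit simplex. -/
def unitSimplex (n : ℕ) : Set (Euc n) := {x | (∀ i, 0 ≤ x i) ∧ ∑ i, x i = 1}

/-- The simplex ball. -/
def simplexBall (n : ℕ) (x : Euc n) (d : ℝ) : Set (Euc n) :=
  {y | ∃ l ∈ unitSimplex n, y = (x - d • ones n) + ((n : ℝ) * d) • l}

/-- The unit l1 ball. -/
def l1Ball (n : ℕ) : Set (Euc n) := {x | ∑ i, |x i| ≤ 1}

/-- Spectral norm of a square real matrix, as operator norm on Euclidean space. -/
def specNorm (n : ℕ) (M : Matrix (Fin n) (Fin n) ℝ) : ℝ :=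
  ‖LinearMap.toContinuousLinearMap (Matrix.toEuclideanLin M)‖

/-- Set of spectral norms of full-rank submatrices with entries ±1/√n. -/
def psiSet (n : ℕ) : Set ℝ :=
  {r | ∃ M : Matrix (Fin n) (Fin n) ℝ,
    (∀ i j, M i j = (Real.sqrt n)⁻¹ ∨ M i j = -(Real.sqrt n)⁻¹) ∧
    M.rank = n ∧ r = specNorm n M}

/-- Euclidean norm is at most the l1 norm. -/
lemma euc_norm_le_sum_abs (n : ℕ) (x : Euc n) : ‖x‖ ≤ ∑ i, |x i| := by
  rw [EuclideanSpace.norm_eq]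
  have h1 : ∑ i, ‖x i‖ ^ 2 ≤ (∑ i, |x i|) ^ 2 := by
    simpa [Real.norm_eq_abs] using
      Finset.sum_sq_le_sq_sum_of_nonneg (s := Finset.univ) (f := fun i => |x i|)
        (fun i _ => abs_nonneg _)
  calc Real.sqrt (∑ i, ‖x i‖ ^ 2) ≤ Real.sqrt ((∑ i, |x i|) ^ 2) := Real.sqrt_le_sqrt h1
    _ = ∑ i, |x i| := Real.sqrt_sq (by positivity)

/-- l1 norm is at most √n times the euclidean norm. -/
lemma sum_abs_le_sqrt_mul (n : ℕ) (x : Euc n) : ∑ i, |x i| ≤ Real.sqrt n * ‖x‖ := by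
  have h1 : (∑ i, |x i|) ^ 2 ≤ n * ∑ i, |x i| ^ 2 := by
    simpa using sq_sum_le_card_mul_sum_sq (s := (Finset.univ : Finset (Fin n)))
      (f := fun i => |x i|)
  have h2 : ∑ i, |x i| ^ 2 = ‖x‖ ^ 2 := by
    rw [EuclideanSpace.norm_eq, Real.sq_sqrt (by positivity)]
    simp [Real.norm_eq_abs]
  have h3 : (∑ i, |x i|) ^ 2 ≤ (Real.sqrt n * ‖x‖) ^ 2 := by
    rw [mul_pow, Real.sq_sqrt (Nat.cast_nonneg n)]
    rw [h2] at h1; exact h1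
  calc ∑ i, |x i| = Real.sqrt ((∑ i, |x i|) ^ 2) := (Real.sqrt_sq (by positivity)).symm
    _ ≤ Real.sqrt ((Real.sqrt n * ‖x‖) ^ 2) := Real.sqrt_le_sqrt h3
    _ = Real.sqrt n * ‖x‖ := Real.sqrt_sq (by positivity)

lemma coord_abs_le_norm (n : ℕ) (x : Euc n) (i : Fin n) : |x i| ≤ ‖x‖ := by
  rw [EuclideanSpace.norm_eq]
  calc |x i| = Real.sqrt (‖x i‖ ^ 2) := by
        rw [Real.sqrt_sq_eq_abs, Real.norm_eq_abs, abs_abs]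
    _ ≤ Real.sqrt (∑ j, ‖x j‖ ^ 2) :=
        Real.sqrt_le_sqrt (Finset.single_le_sum (f := fun j => ‖x j‖ ^ 2)
          (fun j _ => by positivity) (Finset.mem_univ i))

lemma specNorm_le (n : ℕ)
    (M : Matrix (Fin n) (Fin n) ℝ)
    (hM : ∀ i j, M i j = (Real.sqrt n)⁻¹ ∨ M i j = -(Real.sqrt n)⁻¹) :
    specNorm n M ≤ Real.sqrt n := by
  rcases Nat.eq_zero_or_pos n with rfl | hn
  · apply ContinuousLinearMap.opNorm_le_bound _ (Real.sqrt_nonneg _)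
    intro x
    have : x = 0 := Subsingleton.elim _ _
    simp [this]
  have hs : (0:ℝ) < Real.sqrt n := Real.sqrt_pos.2 (by exact_mod_cast hn)
  apply ContinuousLinearMap.opNorm_le_bound _ (Real.sqrt_nonneg _)
  intro x
  set y : Euc n := Matrix.toEuclideanLin M x with hy
  have hcoord : ∀ i, |y i| ≤ ‖x‖ := by
    intro i
    have h1 : y i = ∑ j, M i j * x j := rfl
    have h2 : |y i| ≤ ∑ j, |M i j| * |x j| := by
      rw [h1]
      calc |∑ j, M i j * x j| ≤ ∑ j, |M i j * x j| := Finset.abs_sum_le_sum_abs _ _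
        _ = ∑ j, |M i j| * |x j| := by simp [abs_mul]
    have h3 : ∀ j, |M i j| = (Real.sqrt n)⁻¹ := by
      intro j
      rcases hM i j with h | h <;> rw [h] <;>
        simp [abs_of_nonneg (le_of_lt (inv_pos.2 hs))]
    have h4 : ∑ j, |M i j| * |x j| = (Real.sqrt n)⁻¹ * ∑ j, |x j| := by
      rw [Finset.mul_sum]; exact Finset.sum_congr rfl fun j _ => by rw [h3]
    calc |y i| ≤ (Real.sqrt n)⁻¹ * ∑ j, |x j| := by rw [← h4]; exact h2
      _ ≤ (Real.sqrt n)⁻¹ * (Real.sqrt n * ‖x‖) := by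
          apply mul_le_mul_of_nonneg_left (sum_abs_le_sqrt_mul n x)
            (le_of_lt (inv_pos.2 hs))
      _ = ‖x‖ := by field_simp
  have : ‖y‖ ≤ Real.sqrt n * ‖x‖ := by
    rw [EuclideanSpace.norm_eq]
    have h5 : ∑ i, ‖y i‖ ^ 2 ≤ ∑ _i : Fin n, ‖x‖ ^ 2 := by
      apply Finset.sum_le_sum
      intro i _
      have := hcoord i
      rw [Real.norm_eq_abs]
      exact pow_le_pow_left₀ (abs_nonneg _) this 2
    calc Real.sqrt (∑ i, ‖y i‖ ^ 2) ≤ Real.sqrt (∑ _i : Fin n, ‖x‖ ^ 2) :=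
          Real.sqrt_le_sqrt h5
      _ = Real.sqrt (n * ‖x‖ ^ 2) := by rw [Finset.sum_const]; simp [mul_comm]
      _ = Real.sqrt n * ‖x‖ := by
          rw [Real.sqrt_mul (Nat.cast_nonneg n), Real.sqrt_sq (norm_nonneg _)]
  exact this

lemma specNorm_ge (n : ℕ) (hn : 0 < n)
    (M : Matrix (Fin n) (Fin n) ℝ)
    (hM : ∀ i j, M i j = (Real.sqrt n)⁻¹ ∨ M i j = -(Real.sqrt n)⁻¹) :
    (Real.sqrt n)⁻¹ ≤ specNorm n M := by
  have hs : (0:ℝ) < Real.sqrt n := Real.sqrt_pos.2 (by exact_mod_cast hn)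
  set i0 : Fin n := ⟨0, hn⟩
  set e : Euc n := EuclideanSpace.single i0 1 with he
  set T := LinearMap.toContinuousLinearMap (Matrix.toEuclideanLin M)
  have hnorme : ‖e‖ = 1 := by rw [he, EuclideanSpace.norm_single]; simp
  have h1 : (T e) i0 = M i0 i0 := by
    show (∑ j, M i0 j * e j) = M i0 i0
    have : ∀ j, M i0 j * e j = if j = i0 then M i0 j else 0 := by
      intro j
      rw [he, EuclideanSpace.single_apply]
      by_cases h : j = i0 <;> simp [h]
    rw [Finset.sum_congr rfl fun j _ => this j, Finset.sum_ite_eq']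
    simp
  have h2 : |M i0 i0| = (Real.sqrt n)⁻¹ := by
    rcases hM i0 i0 with h | h <;> rw [h] <;>
      simp [abs_of_nonneg (le_of_lt (inv_pos.2 hs))]
  calc (Real.sqrt n)⁻¹ = |(T e) i0| := by rw [h1, h2]
    _ ≤ ‖T e‖ := coord_abs_le_norm n _ i0
    _ ≤ ‖T‖ * ‖e‖ := T.le_opNorm e
    _ = specNorm n M := by rw [hnorme, mul_one]; rfl

/-- The sign matrix: lower triangular (inclusive) +1, above -1. -/
def sgnMat (n : ℕ) : Matrix (Fin n) (Fin n) ℝ :=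
  fun i j => if (j:ℕ) ≤ (i:ℕ) then 1 else -1

lemma sgnMat_mulVec_eq_zero (n : ℕ) (hn : 0 < n) (x : Fin n → ℝ)
    (hx : ∀ i, ∑ j, sgnMat n i j * x j = 0) : x = 0 := by
  have key : ∀ j : Fin n, (j:ℕ) ≠ 0 → x j = 0 := by
    intro j hj
    have hjlt : (j:ℕ) - 1 < n := lt_of_le_of_lt (Nat.sub_le _ _) j.isLt
    set j' : Fin n := ⟨(j:ℕ) - 1, hjlt⟩
    have hterm : ∀ k : Fin n, (sgnMat n j k - sgnMat n j' k) * x k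
        = if k = j then 2 * x j else 0 := by
      intro k
      by_cases hk : k = j
      · subst hk
        have h1 : sgnMat n k k = 1 := by simp [sgnMat]
        have h2 : sgnMat n j' k = -1 := by
          have : ¬ ((k:ℕ) ≤ (k:ℕ) - 1) := by omega
          exact if_neg this
        rw [h1, h2, if_pos rfl]; ring
      · have hkj : (k:ℕ) ≠ (j:ℕ) := fun h => hk (Fin.ext h)
        by_cases h : (k:ℕ) ≤ (j:ℕ) - 1
        · have h1 : sgnMat n j k = 1 := by
            have : (k:ℕ) ≤ (j:ℕ) := by omega
            simp [sgnMat, this]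
          have h2 : sgnMat n j' k = 1 := by exact if_pos h
          simp [h1, h2, hk]
        · have h1 : sgnMat n j k = -1 := by
            have : ¬ ((k:ℕ) ≤ (j:ℕ)) := by omega
            simp [sgnMat, this]
          have h2 : sgnMat n j' k = -1 := by exact if_neg h
          simp [h1, h2, hk]
    have hsum : ∑ k, (sgnMat n j k - sgnMat n j' k) * x k = 0 := by
      have : ∑ k, (sgnMat n j k - sgnMat n j' k) * x k
          = (∑ k, sgnMat n j k * x k) - ∑ k, sgnMat n j' k * x k := by
        rw [← Finset.sum_sub_distrib]
        exact Finset.sum_congr rfl fun k _ => by ring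
      rw [this, hx j, hx j', sub_zero]
    rw [Finset.sum_congr rfl fun k _ => hterm k, Finset.sum_ite_eq'] at hsum
    simp at hsum
    linarith
  set i0 : Fin n := ⟨0, hn⟩
  have hx0 : x i0 = 0 := by
    have := hx i0
    have hz : ∀ k : Fin n, k ≠ i0 → sgnMat n i0 k * x k = 0 := by
      intro k hk
      have : (k:ℕ) ≠ 0 := fun h => hk (Fin.ext h)
      rw [key k this, mul_zero]
    rw [Fintype.sum_eq_single i0 hz] at this
    have h1 : sgnMat n i0 i0 = 1 := by simp [sgnMat]
    rw [h1, one_mul] at this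
    exact this
  funext j
  by_cases h : (j:ℕ) = 0
  · have : j = i0 := Fin.ext h
    rw [this, hx0]; rfl
  · rw [key j h]; rfl

lemma psiSet_witness (n : ℕ) (hn : 0 < n) :
    ∃ r ∈ psiSet n, (Real.sqrt n)⁻¹ ≤ r := by
  have hs : (0:ℝ) < Real.sqrt n := Real.sqrt_pos.2 (by exact_mod_cast hn)
  set c : ℝ := (Real.sqrt n)⁻¹ with hc
  have hc0 : c ≠ 0 := ne_of_gt (inv_pos.2 hs)
  set M : Matrix (Fin n) (Fin n) ℝ := fun i j => c * sgnMat n i j with hMdef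
  have hent : ∀ i j, M i j = (Real.sqrt n)⁻¹ ∨ M i j = -(Real.sqrt n)⁻¹ := by
    intro i j
    by_cases h : (j:ℕ) ≤ (i:ℕ)
    · left
      show c * sgnMat n i j = (Real.sqrt n)⁻¹
      have h1 : sgnMat n i j = 1 := if_pos h
      rw [h1, mul_one]
    · right
      show c * sgnMat n i j = -(Real.sqrt n)⁻¹
      have h1 : sgnMat n i j = -1 := if_neg h
      rw [h1, mul_neg_one]
  have hinj : Function.Injective M.mulVec := by
    intro x y hxy
    have h0 : M.mulVec (x - y) = 0 := by rw [Matrix.mulVec_sub, hxy, sub_self]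
    have h1 : ∀ i, ∑ j, sgnMat n i j * (x - y) j = 0 := by
      intro i
      have := congrFun h0 i
      have h2 : M.mulVec (x - y) i = c * ∑ j, sgnMat n i j * (x - y) j := by
        show (∑ j, M i j * (x - y) j) = _
        rw [Finset.mul_sum]
        exact Finset.sum_congr rfl fun j _ => by rw [hMdef]; ring
      rw [h2] at this
      exact (mul_eq_zero.1 this).resolve_left hc0
    have := sgnMat_mulVec_eq_zero n hn (x - y) h1
    exact sub_eq_zero.1 this
  have hrank : M.rank = n := by
    rw [Matrix.rank_of_isUnit M (Matrix.mulVec_injective_iff_isUnit.1 hinj)]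
    exact Fintype.card_fin n
  exact ⟨specNorm n M, ⟨M, hent, hrank, rfl⟩, specNorm_ge n hn M hent⟩

theorem l1ball_diameter_and_condition_number (n : ℕ) (hn : 0 < n) :
    IsGreatest {r : ℝ | ∃ x ∈ l1Ball n, ∃ y ∈ l1Ball n, r = ‖x - y‖} 2 ∧
    (Real.sqrt n)⁻¹ ≤ sSup (psiSet n) ∧
    sSup (psiSet n) ≤ Real.sqrt n ∧
    1 ≤ sSup (psiSet n) * 2 / (2 / Real.sqrt n) ∧
    sSup (psiSet n) * 2 / (2 / Real.sqrt n) ≤ (n : ℝ) := by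
  have hs : (0:ℝ) < Real.sqrt n := Real.sqrt_pos.2 (by exact_mod_cast hn)
  -- diameter part
  have hdiam : IsGreatest {r : ℝ | ∃ x ∈ l1Ball n, ∃ y ∈ l1Ball n, r = ‖x - y‖} 2 := by
    constructor
    · set i0 : Fin n := ⟨0, hn⟩
      set e : Euc n := EuclideanSpace.single i0 1 with he
      have hmem : e ∈ l1Ball n := by
        show (∑ i, |e i|) ≤ 1
        have : ∀ i, |e i| = if i = i0 then 1 else 0 := by
          intro i
          rw [he, EuclideanSpace.single_apply]
          by_cases h : i = i0 <;> simp [h]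
        rw [Finset.sum_congr rfl fun i _ => this i, Finset.sum_ite_eq']
        simp
      have hmem' : -e ∈ l1Ball n := by
        show (∑ i, |(-e) i|) ≤ 1
        have : ∀ i, |(-e) i| = |e i| := fun i => by
          show |(-(e i))| = _ ; rw [abs_neg]
        rw [Finset.sum_congr rfl fun i _ => this i]
        exact hmem
      refine ⟨e, hmem, -e, hmem', ?_⟩
      have : e - (-e) = (2:ℝ) • e := by
        ext i; simp [two_smul]
      rw [this, norm_smul]
      rw [he, EuclideanSpace.norm_single]
      simp
    · rintro r ⟨x, hx, y, hy, rfl⟩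
      have h1 : ‖x‖ ≤ 1 := le_trans (euc_norm_le_sum_abs n x) hx
      have h2 : ‖y‖ ≤ 1 := le_trans (euc_norm_le_sum_abs n y) hy
      calc ‖x - y‖ ≤ ‖x‖ + ‖y‖ := norm_sub_le x y
        _ ≤ 2 := by linarith
  obtain ⟨r0, hr0mem, hr0ge⟩ := psiSet_witness n hn
  have hbdd : BddAbove (psiSet n) := by
    refine ⟨Real.sqrt n, ?_⟩
    rintro r ⟨M, hM, -, rfl⟩
    exact specNorm_le n M hM
  have hne : (psiSet n).Nonempty := ⟨r0, hr0mem⟩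
  have hlow : (Real.sqrt n)⁻¹ ≤ sSup (psiSet n) :=
    le_trans hr0ge (le_csSup hbdd hr0mem)
  have hup : sSup (psiSet n) ≤ Real.sqrt n := by
    apply csSup_le hne
    rintro r ⟨M, hM, -, rfl⟩
    exact specNorm_le n M hM
  refine ⟨hdiam, hlow, hup, ?_, ?_⟩
  · have heq : sSup (psiSet n) * 2 / (2 / Real.sqrt n) = sSup (psiSet n) * Real.sqrt n := by
      field_simp
    rw [heq]
    calc (1:ℝ) = (Real.sqrt n)⁻¹ * Real.sqrt n := by field_simp
      _ ≤ sSup (psiSet n) * Real.sqrt n :=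
        mul_le_mul_of_nonneg_right hlow (le_of_lt hs)
  · have heq : sSup (psiSet n) * 2 / (2 / Real.sqrt n) = sSup (psiSet n) * Real.sqrt n := by
      field_simp
    rw [heq]
    calc sSup (psiSet n) * Real.sqrt n ≤ Real.sqrt n * Real.sqrt n :=
        mul_le_mul_of_nonneg_right hup (le_of_lt hs)
      _ = (n:ℝ) := Real.mul_self_sqrt (Nat.cast_nonneg n)
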